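/- arXiv:1912.02759 — 6 statements merged into one kernel-verified Lean document; each statement's English description precedes it below -/
import Mathlib

section
/- ⊢ K̄_C B_C^D φ → (φ → B_C^D φ), for any coalitions C, D and any formula φ of Φ. -/
namespace DutyToWarn

/-- The language Φ: propositional variables, negation, implication,
distributed knowledge `K_C φ`, and second-order blameworthiness `B_C^D φ`. -/
inductive Formula (Agent V : Type) : Type
  | var : V → Formula Agent V
  | neg : Formula Agent V → Formula Agent V
  | imp : Formula Agent V → Formula Agent V → Formula Agent V
  | know : Set Agent → Formula Agent V → Formula Agent V
  | blame : Set Agent → Set Agent → Formula Agent V → Formula Agent V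

variable {Agent V B : Type}

namespace Formula

/-- φ ∨ ψ is defined through ¬ and → in the usual way: ¬φ → ψ. -/
def disj (φ ψ : Formula Agent V) : Formula Agent V := imp (neg φ) ψ

/-- φ ∧ ψ is defined through ¬ and → in the usual way: ¬(φ → ¬ψ). -/
def conj (φ ψ : Formula Agent V) : Formula Agent V := neg (imp φ (neg ψ))

/-- φ ↔ ψ is defined as (φ → ψ) ∧ (ψ → φ). -/
def biimp (φ ψ : Formula Agent V) : Formula Agent V := conj (imp φ ψ) (imp ψ φ)

/-- K̄_C φ abbreviates ¬ K_C ¬ φ. -/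
def dknow (C : Set Agent) (φ : Formula Agent V) : Formula Agent V := neg (know C (neg φ))

end Formula

/-- The Boolean constant ⊥, defined through ¬ and →. -/
def falsum [Inhabited V] : Formula Agent V :=
  Formula.neg (Formula.imp (Formula.var default) (Formula.var default))

/-- The disjunction χ₁ ∨ … ∨ χₙ of a list of formulas; for n = 0 it is ⊥. -/
def bigOr [Inhabited V] : List (Formula Agent V) → Formula Agent V
  | [] => falsum
  | [φ] => φ
  | φ :: ψ :: l => φ.disj (bigOr (ψ :: l))

/-- A propositional valuation: any assignment of truth values to formulas
that respects negation and implication (treating K- and B-formulas as atoms). -/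
def IsPropValuation (v : Formula Agent V → Prop) : Prop :=
  (∀ φ : Formula Agent V, v φ.neg ↔ ¬ v φ) ∧
    ∀ φ ψ : Formula Agent V, v (φ.imp ψ) ↔ (v φ → v ψ)

/-- A propositional tautology in the language Φ. -/
def Tautology (φ : Formula Agent V) : Prop :=
  ∀ v : Formula Agent V → Prop, IsPropValuation v → v φ

/-- ⊢ φ : provability from the axioms using Modus Ponens and Necessitation. -/
inductive Provable : Formula Agent V → Prop
  | taut {φ : Formula Agent V} : Tautology φ → Provable φ
  | truthK {C : Set Agent} {φ : Formula Agent V} :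
      Provable ((Formula.know C φ).imp φ)
  | truthB {C D : Set Agent} {φ : Formula Agent V} :
      Provable ((Formula.blame C D φ).imp φ)
  | distr {C : Set Agent} {φ ψ : Formula Agent V} :
      Provable ((Formula.know C (φ.imp ψ)).imp ((Formula.know C φ).imp (Formula.know C ψ)))
  | negIntro {C : Set Agent} {φ : Formula Agent V} :
      Provable ((Formula.know C φ).neg.imp (Formula.know C (Formula.know C φ).neg))
  | monoK {C E : Set Agent} {φ : Formula Agent V} (h : C ⊆ E) :
      Provable ((Formula.know C φ).imp (Formula.know E φ))
  | monoB {C D E F : Set Agent} {φ : Formula Agent V} (h1 : C ⊆ E) (h2 : D ⊆ F) :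
      Provable ((Formula.blame C D φ).imp (Formula.blame E F φ))
  | noneToAct {C : Set Agent} {φ : Formula Agent V} :
      Provable (Formula.neg (Formula.blame C ∅ φ))
  | jointResp {C D E F : Set Agent} {φ ψ : Formula Agent V} (h : D ∩ F = ∅) :
      Provable (((Formula.dknow C (Formula.blame C D φ)).conj
        (Formula.dknow E (Formula.blame E F ψ))).imp
        ((φ.disj ψ).imp (Formula.blame (C ∪ E) (D ∪ F) (φ.disj ψ))))
  | strictCond {C D : Set Agent} {φ ψ : Formula Agent V} :
      Provable ((Formula.know C (φ.imp ψ)).imp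
        ((Formula.blame C D ψ).imp (φ.imp (Formula.blame C D φ))))
  | introB {C D : Set Agent} {φ : Formula Agent V} :
      Provable ((Formula.blame C D φ).imp (Formula.know C (φ.imp (Formula.blame C D φ))))
  | mp {φ ψ : Formula Agent V} : Provable (φ.imp ψ) → Provable φ → Provable ψ
  | nec {C : Set Agent} {φ : Formula Agent V} : Provable φ → Provable (Formula.know C φ)

/-- X ⊢ φ : provability from the theorems of the system together with the
additional hypotheses X, using only Modus Ponens. -/
inductive ProvableFrom (X : Set (Formula Agent V)) : Formula Agent V → Prop
  | hyp {φ : Formula Agent V} (h : φ ∈ X) : ProvableFrom X φ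
  | thm {φ : Formula Agent V} (h : Provable φ) : ProvableFrom X φ
  | mp {φ ψ : Formula Agent V} (h1 : ProvableFrom X (φ.imp ψ)) (h2 : ProvableFrom X φ) :
      ProvableFrom X ψ

/-- A game (Definition 1). -/
structure Game (Agent V : Type) where
  I : Type
  Δ : Type
  Ω : Type
  sim : Agent → I → I → Prop
  sim_equiv : ∀ a : Agent, Equivalence (sim a)
  P : Set (I × (Agent → Δ) × Ω)
  play_exists : ∀ (α : I) (δ : Agent → Δ), ∃ ω : Ω, (α, δ, ω) ∈ P
  π : V → Set (I × (Agent → Δ) × Ω)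
  π_sub : ∀ p : V, π p ⊆ P

/-- α ∼_C α' : indistinguishability by a coalition. -/
def Game.simC (G : Game Agent V) (C : Set Agent) (α α' : G.I) : Prop :=
  ∀ a ∈ C, G.sim a α α'

/-- Satisfiability (α,δ,ω) ⊩ φ (Definition 2). -/
def Game.Sat (G : Game Agent V) :
    Formula Agent V → (G.I × (Agent → G.Δ) × G.Ω) → Prop
  | Formula.var p, x => x ∈ G.π p
  | Formula.neg φ, x => ¬ G.Sat φ x
  | Formula.imp φ ψ, x => G.Sat φ x → G.Sat ψ x
  | Formula.know C φ, x => ∀ x' ∈ G.P, G.simC C x.1 x'.1 → G.Sat φ x'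
  | Formula.blame C D φ, x => G.Sat φ x ∧
      ∃ s : Agent → G.Δ, ∀ x' ∈ G.P, G.simC C x.1 x'.1 →
        (∀ a ∈ D, s a = x'.2.1 a) → ¬ G.Sat φ x'

/-- A set of formulas is consistent if no contradiction is derivable from it. -/
def Consistent (X : Set (Formula Agent V)) : Prop :=
  ¬ ∃ φ : Formula Agent V, ProvableFrom X φ ∧ ProvableFrom X φ.neg

/-- A maximal consistent set: consistent with no proper consistent extension. -/
def MaxConsistent (X : Set (Formula Agent V)) : Prop :=
  Consistent X ∧ ∀ Y : Set (Formula Agent V), X ⊆ Y → Consistent Y → Y = X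

/-- One step (Cᵢ,bᵢ),Xᵢ of a sequence in the set of outcomes of the canonical game. -/
abbrev Step (Agent V B : Type) : Type := Set Agent × B × Set (Formula Agent V)

/-- Validity of a sequence X₀,(C₁,b₁),X₁,…,(Cₙ,bₙ),Xₙ : each Xᵢ is maximal
consistent and {φ | K_{Cᵢ} φ ∈ X_{i-1}} ⊆ Xᵢ. -/
def ValidSeq (X₀ : Set (Formula Agent V)) : List (Step Agent V B) → Prop
  | [] => True
  | (C, _, X) :: l =>
      MaxConsistent X ∧ (∀ φ : Formula Agent V, Formula.know C φ ∈ X₀ → φ ∈ X) ∧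
        ValidSeq X l

/-- The set Ω of outcomes of the canonical game G(X₀): valid sequences starting at X₀
(the sequence of steps after X₀ is recorded). -/
def COutcome (X₀ : Set (Formula Agent V)) (B : Type) : Type :=
  {l : List (Step Agent V B) // ValidSeq X₀ l}

/-- The last maximal consistent set of a sequence. -/
def hdSeq (X₀ : Set (Formula Agent V)) : List (Step Agent V B) → Set (Formula Agent V)
  | [] => X₀
  | (_, _, X) :: l => hdSeq X l

/-- hd(ω) : the last maximal consistent set of the outcome ω. -/
def chd {X₀ : Set (Formula Agent V)} (ω : COutcome X₀ B) : Set (Formula Agent V) :=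
  hdSeq X₀ ω.1

/-- ω ∼_a ω' in the Tree of Knowledge: all edges along the unique path between
ω and ω' are labeled with agent a, i.e. there is a common ancestor w such that
every edge from w down to ω and from w down to ω' is labeled with a. -/
def csimA {X₀ : Set (Formula Agent V)} (a : Agent) (u v : COutcome X₀ B) : Prop :=
  ∃ w t t' : List (Step Agent V B),
    u.1 = w ++ t ∧ v.1 = w ++ t' ∧ (∀ s ∈ t, a ∈ s.1) ∧ (∀ s ∈ t', a ∈ s.1)

/-- ω ∼_C ω' iff ω ∼_a ω' for each a ∈ C. -/
def csimC {X₀ : Set (Formula Agent V)} (C : Set Agent) (u v : COutcome X₀ B) : Prop :=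
  ∀ a ∈ C, csimA a u v

/-- The relation ∼_𝒜 on outcomes. -/
def crel (X₀ : Set (Formula Agent V)) (B : Type) : COutcome X₀ B → COutcome X₀ B → Prop :=
  csimC (Set.univ : Set Agent)

/-- The set I of initial states of the canonical game: I = Ω/∼_𝒜. -/
def CI (X₀ : Set (Formula Agent V)) (B : Type) : Type :=
  Quot (crel X₀ B)

/-- The equivalence class of an outcome. -/
def ctoI {X₀ : Set (Formula Agent V)} (u : COutcome X₀ B) : CI X₀ B :=
  Quot.mk (crel X₀ B) u

/-- The relation α ∼_C α' on I, induced on representatives. -/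
def IsimC {X₀ : Set (Formula Agent V)} (C : Set Agent) (α α' : CI X₀ B) : Prop :=
  ∃ u v : COutcome X₀ B, ctoI u = α ∧ ctoI v = α' ∧ csimC C u v

/-- The domain of actions of the canonical game: Δ = {(φ,C,ω)}. -/
abbrev CAct (X₀ : Set (Formula Agent V)) (B : Type) : Type :=
  Formula Agent V × Set Agent × COutcome X₀ B

/-- Triples (α, δ, ω) over the canonical game. -/
abbrev CPlay (X₀ : Set (Formula Agent V)) (B : Type) : Type :=
  CI X₀ B × (Agent → CAct X₀ B) × COutcome X₀ B

/-- The set P of plays of the canonical game (Definition 13). -/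
def CP (X₀ : Set (Formula Agent V)) (B : Type) : Set (CPlay X₀ B) :=
  {x | ctoI x.2.2 = x.1 ∧
    ∀ (v : COutcome X₀ B) (C D : Set Agent) (ψ : Formula Agent V),
      Formula.dknow C (Formula.blame C D ψ) ∈ chd v →
      (∀ a ∈ D, x.2.1 a = (ψ, C, v)) →
      csimC C x.2.2 v →
      Formula.neg ψ ∈ chd x.2.2}

/-- π(p) in the canonical game. -/
def Cπ (X₀ : Set (Formula Agent V)) (B : Type) (p : V) : Set (CPlay X₀ B) :=
  {x | x ∈ CP X₀ B ∧ Formula.var p ∈ chd x.2.2}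

/-- Satisfiability in the canonical game G(X₀) (Definition 2 instantiated). -/
def CSat (X₀ : Set (Formula Agent V)) (B : Type) :
    Formula Agent V → CPlay X₀ B → Prop
  | Formula.var p, x => x ∈ Cπ X₀ B p
  | Formula.neg φ, x => ¬ CSat X₀ B φ x
  | Formula.imp φ ψ, x => CSat X₀ B φ x → CSat X₀ B ψ x
  | Formula.know C φ, x => ∀ x' ∈ CP X₀ B, IsimC C x.1 x'.1 → CSat X₀ B φ x'
  | Formula.blame C D φ, x => CSat X₀ B φ x ∧
      ∃ s : Agent → CAct X₀ B, ∀ x' ∈ CP X₀ B, IsimC C x.1 x'.1 →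
        (∀ a ∈ D, s a = x'.2.1 a) → ¬ CSat X₀ B φ x'

/-- Contraposition tautology: (a → b) → (¬b → ¬a). -/
lemma taut_contra (a b : Formula Agent V) :
    Provable ((a.imp b).imp ((b.neg).imp (a.neg))) := by
  apply Provable.taut
  intro v ⟨hn, hi⟩
  simp only [hi, hn]; tauto

/-- Syllogism tautology: (a → b) → ((b → c) → (a → c)). -/
lemma taut_syll (a b c : Formula Agent V) :
    Provable ((a.imp b).imp ((b.imp c).imp (a.imp c))) := by
  apply Provable.taut
  intro v ⟨hn, hi⟩
  simp only [hi, hn]; tauto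

/-- Classical tautology: (¬a → b) → (¬b → a). -/
lemma taut_contra' (a b : Formula Agent V) :
    Provable ((a.neg.imp b).imp ((b.neg).imp a)) := by
  apply Provable.taut
  intro v ⟨hn, hi⟩
  simp only [hi, hn]; tauto

lemma prov_chain {a b c : Formula Agent V} (h1 : Provable (a.imp b))
    (h2 : Provable (b.imp c)) : Provable (a.imp c) :=
  Provable.mp (Provable.mp (taut_syll a b c) h1) h2

/-- Lemma 3: ⊢ K̄_C B_C^D φ → (φ → B_C^D φ). -/
theorem alt_fairness {Agent V : Type} (C D : Set Agent) (φ : Formula Agent V) :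
    Provable ((Formula.dknow C (Formula.blame C D φ)).imp
      (φ.imp (Formula.blame C D φ))) := by
  set Bf := Formula.blame C D φ with hB
  set K1 := Formula.know C (φ.imp Bf) with hK
  -- B → K_C(φ → B)
  have h1 : Provable (Bf.imp K1) := Provable.introB
  -- ¬K_C(φ → B) → ¬B
  have h2 : Provable (K1.neg.imp Bf.neg) :=
    Provable.mp (taut_contra Bf K1) h1
  -- K_C(¬K_C(φ → B) → ¬B)
  have h3 : Provable (Formula.know C (K1.neg.imp Bf.neg)) := Provable.nec h2
  -- K_C ¬K_C(φ → B) → K_C ¬B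
  have h4 : Provable ((Formula.know C K1.neg).imp (Formula.know C Bf.neg)) :=
    Provable.mp Provable.distr h3
  -- ¬K_C(φ → B) → K_C ¬K_C(φ → B)
  have h5 : Provable (K1.neg.imp (Formula.know C K1.neg)) := Provable.negIntro
  -- ¬K_C(φ → B) → K_C ¬B
  have h6 : Provable (K1.neg.imp (Formula.know C Bf.neg)) := prov_chain h5 h4
  -- ¬K_C ¬B → K_C(φ → B)
  have h7 : Provable ((Formula.know C Bf.neg).neg.imp K1) :=
    Provable.mp (taut_contra' K1 (Formula.know C Bf.neg)) h6
  -- K_C(φ → B) → (φ → B)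
  have h8 : Provable (K1.imp (φ.imp Bf)) := Provable.truthK
  exact prov_chain h7 h8

end DutyToWarn
end

section
/- Soundness of the Joint Responsibility axiom: for any game and any play (α,δ,ω)∈P, if D∩F=∅, (α,δ,ω)⊩K̄_C B_C^D φ, (α,δ,ω)⊩K̄_E B_E^F ψ, and (α,δ,ω)⊩φ∨ψ, then (α,δ,ω)⊩B_{C∪E}^{D∪F}(φ∨ψ). -/
namespace DutyToWarn

variable {Agent V B : Type}

/-- Lemma 8: Soundness of the Joint Responsibility axiom. -/
theorem joint_responsibility_sound {Agent V : Type} (G : Game Agent V)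
    (x : G.I × (Agent → G.Δ) × G.Ω) (hx : x ∈ G.P)
    (C D E F : Set Agent) (φ ψ : Formula Agent V) (hDF : D ∩ F = ∅)
    (h1 : G.Sat (Formula.dknow C (Formula.blame C D φ)) x)
    (h2 : G.Sat (Formula.dknow E (Formula.blame E F ψ)) x)
    (h3 : G.Sat (φ.disj ψ) x) :
    G.Sat (Formula.blame (C ∪ E) (D ∪ F) (φ.disj ψ)) x := by
  classical
  -- unpack h1 : ∃ play indistinguishable for C where blame C D φ holds
  simp only [Formula.dknow, Game.Sat, not_forall] at h1 h2
  obtain ⟨x1, hx1P, hx1sim, hb1⟩ := h1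
  obtain ⟨x2, hx2P, hx2sim, hb2⟩ := h2
  rw [not_not] at hb1 hb2
  obtain ⟨-, s1, hs1⟩ := hb1
  obtain ⟨-, s2, hs2⟩ := hb2
  refine ⟨h3, fun a => if a ∈ D then s1 a else s2 a, ?_⟩
  intro y hyP hysim hagr
  have hsimCy : G.simC C x1.1 y.1 := fun a ha =>
    (G.sim_equiv a).trans ((G.sim_equiv a).symm (hx1sim a ha))
      (hysim a (Set.mem_union_left E ha))
  have hsimEy : G.simC E x2.1 y.1 := fun a ha =>
    (G.sim_equiv a).trans ((G.sim_equiv a).symm (hx2sim a ha))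
      (hysim a (Set.mem_union_right C ha))
  have hnphi : ¬ G.Sat φ y := by
    refine hs1 y hyP hsimCy fun a ha => ?_
    have := hagr a (Set.mem_union_left F ha)
    simpa [ha] using this
  have hnpsi : ¬ G.Sat ψ y := by
    refine hs2 y hyP hsimEy fun a ha => ?_
    have haD : a ∉ D := fun hD => Set.eq_empty_iff_forall_notMem.mp hDF a ⟨hD, ha⟩
    have := hagr a (Set.mem_union_right D ha)
    simpa [haD] using this
  simp only [Formula.disj, Game.Sat]
  intro h
  exact hnpsi (h hnphi)

end DutyToWarn
end

section
/- Soundness of the Strict Conditional axiom: for any game and any play (α,δ,ω)∈P, if (α,δ,ω)⊩K_C(φ→ψ), (α,δ,ω)⊩B_C^D ψ, and (α,δ,ω)⊩φ, then (α,δ,ω)⊩B_C^D φ. -/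
namespace DutyToWarn

variable {Agent V B : Type}

/-- Lemma 9: Soundness of the Strict Conditional axiom. -/
theorem strict_conditional_sound {Agent V : Type} (G : Game Agent V)
    (x : G.I × (Agent → G.Δ) × G.Ω) (hx : x ∈ G.P)
    (C D : Set Agent) (φ ψ : Formula Agent V)
    (h1 : G.Sat (Formula.know C (φ.imp ψ)) x)
    (h2 : G.Sat (Formula.blame C D ψ) x)
    (h3 : G.Sat φ x) :
    G.Sat (Formula.blame C D φ) x := by
  obtain ⟨hψ, s, hs⟩ := h2
  refine ⟨h3, s, fun x' hx' hsim hD hφ' => hs x' hx' hsim hD (h1 x' hx' hsim hφ')⟩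

end DutyToWarn
end

section
/- Soundness of the Introspection of Blameworthiness axiom: for any game and any play (α,δ,ω)∈P, if (α,δ,ω)⊩B_C^D φ, then (α,δ,ω)⊩K_C(φ→B_C^D φ). -/
namespace DutyToWarn

variable {Agent V B : Type}

/-- Lemma 10: Soundness of the Introspection of Blameworthiness axiom. -/
theorem introspection_sound {Agent V : Type} (G : Game Agent V)
    (x : G.I × (Agent → G.Δ) × G.Ω) (hx : x ∈ G.P)
    (C D : Set Agent) (φ : Formula Agent V)
    (h : G.Sat (Formula.blame C D φ) x) :
    G.Sat (Formula.know C (φ.imp (Formula.blame C D φ))) x := by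
  obtain ⟨hφ, s, hs⟩ := h
  intro x' hx' hsim hφ'
  refine ⟨hφ', s, ?_⟩
  intro x'' hx'' hsim' hact
  exact hs x'' hx'' (fun a ha => (G.sim_equiv a).trans (hsim a ha) (hsim' a ha)) hact

end DutyToWarn
end

section
/- Soundness: if ⊢φ, then (α,δ,ω)⊩φ for every game and every play (α,δ,ω)∈P of that game. -/
namespace DutyToWarn

variable {Agent V B : Type}

/-- Soundness: if ⊢ φ, then (α,δ,ω) ⊩ φ for every game and every play. -/
theorem soundness {Agent V : Type} (φ : Formula Agent V) (h : Provable φ) :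
    ∀ (G : Game Agent V) (x : G.I × (Agent → G.Δ) × G.Ω), x ∈ G.P → G.Sat φ x := by
  have refl : ∀ (G : Game Agent V) (C : Set Agent) (α : G.I), G.simC C α α :=
    fun G C α a _ => (G.sim_equiv a).refl α
  have symm : ∀ (G : Game Agent V) (C : Set Agent) {α β : G.I},
      G.simC C α β → G.simC C β α :=
    fun G C α β h a ha => (G.sim_equiv a).symm (h a ha)
  have trans : ∀ (G : Game Agent V) (C : Set Agent) {α β γ : G.I},
      G.simC C α β → G.simC C β γ → G.simC C α γ :=
    fun G C α β γ h1 h2 a ha => (G.sim_equiv a).trans (h1 a ha) (h2 a ha)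
  have mono : ∀ (G : Game Agent V) {C E : Set Agent} (h : C ⊆ E) {α β : G.I},
      G.simC E α β → G.simC C α β :=
    fun G C E h α β hs a ha => hs a (h ha)
  induction h with
  | taut ht =>
    intro G x hx
    exact ht (fun ψ => G.Sat ψ x) ⟨fun ψ => Iff.rfl, fun ψ χ => Iff.rfl⟩
  | truthK =>
    intro G x hx hK
    exact hK x hx (refl G _ _)
  | truthB =>
    intro G x hx hB
    exact hB.1
  | distr =>
    intro G x hx h1 h2 x' hx' hsim
    exact h1 x' hx' hsim (h2 x' hx' hsim)
  | negIntro =>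
    intro G x hx hn x' hx' hsim hK
    apply hn
    intro y hy hsy
    exact hK y hy (trans G _ (symm G _ hsim) hsy)
  | monoK h =>
    intro G x hx hK x' hx' hsim
    exact hK x' hx' (mono G h hsim)
  | monoB h1 h2 =>
    intro G x hx hB
    obtain ⟨hφ, s, hs⟩ := hB
    exact ⟨hφ, s, fun x' hx' hsim hag =>
      hs x' hx' (mono G h1 hsim) (fun a ha => hag a (h2 ha))⟩
  | noneToAct =>
    intro G x hx hB
    obtain ⟨hφ, s, hs⟩ := hB
    exact hs x hx (refl G _ _) (fun a ha => absurd ha (Set.notMem_empty a)) hφ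
  | @jointResp C D E F φ ψ h =>
    intro G x hx hconj hdisj
    simp only [Game.Sat, Formula.conj, Formula.dknow, Formula.disj] at hconj hdisj ⊢
    rw [_root_.not_imp] at hconj
    obtain ⟨h1, h2⟩ := hconj
    push_neg at h1 h2
    obtain ⟨x1, hx1, hsim1, hφ1, s1, hs1⟩ := h1
    obtain ⟨x2, hx2, hsim2, hψ2, s2, hs2⟩ := h2
    classical
    refine ⟨hdisj, fun a => if a ∈ D then s1 a else s2 a, ?_⟩
    intro y hy hsy hag hcon
    have hsyC : G.simC C x.1 y.1 := mono G Set.subset_union_left hsy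
    have hsyE : G.simC E x.1 y.1 := mono G Set.subset_union_right hsy
    have hnφ : ¬ G.Sat φ y := by
      apply hs1 y hy (trans G _ (symm G _ hsim1) hsyC)
      intro a ha
      have := hag a (Set.mem_union_left _ ha)
      simpa only [if_pos ha] using this
    have hnψ : ¬ G.Sat ψ y := by
      apply hs2 y hy (trans G _ (symm G _ hsim2) hsyE)
      intro a ha
      have haD : a ∉ D := fun haD =>
        Set.notMem_empty a (h ▸ Set.mem_inter haD ha)
      have := hag a (Set.mem_union_right _ ha)
      simpa only [if_neg haD] using this
    exact hnψ (hcon hnφ)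
  | strictCond =>
    intro G x hx hK hB hφ
    obtain ⟨hψ, s, hs⟩ := hB
    refine ⟨hφ, s, ?_⟩
    intro y hy hsim hag hφy
    exact hs y hy hsim hag (hK y hy hsim hφy)
  | introB =>
    intro G x hx hB y hy hsim hφy
    obtain ⟨hφ, s, hs⟩ := hB
    refine ⟨hφy, s, ?_⟩
    intro z hz hsz hag
    exact hs z hz (trans G _ hsim hsz) hag
  | mp h1 h2 ih1 ih2 =>
    intro G x hx
    exact ih1 G x hx (ih2 G x hx)
  | nec h ih =>
    intro G x hx x' hx' hsim
    exact ih G x' hx'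

end DutyToWarn
end

section
/- Transport lemma: in the canonical game G(X₀), for any outcomes ω, ω' ∈ Ω with ω ∼_C ω' and any formula φ of Φ: K_C φ ∈ hd(ω) if and only if K_C φ ∈ hd(ω'). -/
namespace DutyToWarn

variable {Agent V B : Type}

section Aux

open Formula

/-! ### Propositional tautologies and basic provability facts -/

private lemma taut_id {φ : Formula Agent V} : Tautology (φ.imp φ) := by
  intro v hv; obtain ⟨hn, hi⟩ := hv; simp only [hi, hn]; tauto

private lemma taut_weaken {φ ψ : Formula Agent V} : Tautology (ψ.imp (φ.imp ψ)) := by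
  intro v hv; obtain ⟨hn, hi⟩ := hv; simp only [hi, hn]; tauto

private lemma taut_S {φ ψ χ : Formula Agent V} :
    Tautology ((φ.imp (ψ.imp χ)).imp ((φ.imp ψ).imp (φ.imp χ))) := by
  intro v hv; obtain ⟨hn, hi⟩ := hv; simp only [hi, hn]; tauto

private lemma taut_trans {φ ψ χ : Formula Agent V} :
    Tautology ((φ.imp ψ).imp ((ψ.imp χ).imp (φ.imp χ))) := by
  intro v hv; obtain ⟨hn, hi⟩ := hv; simp only [hi, hn]; tauto

private lemma taut_negcomb {φ χ : Formula Agent V} :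
    Tautology ((φ.imp χ).imp ((φ.imp χ.neg).imp φ.neg)) := by
  intro v hv; obtain ⟨hn, hi⟩ := hv; simp only [hi, hn]; tauto

private lemma taut_contra1 {φ ψ : Formula Agent V} :
    Tautology ((φ.imp ψ.neg).imp (ψ.imp φ.neg)) := by
  intro v hv; obtain ⟨hn, hi⟩ := hv; simp only [hi, hn]; tauto

private lemma taut_contra2 {φ ψ : Formula Agent V} :
    Tautology ((φ.neg.imp ψ).imp (ψ.neg.imp φ)) := by
  intro v hv; obtain ⟨hn, hi⟩ := hv; simp only [hi, hn]; tauto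

private lemma prov_trans {φ ψ χ : Formula Agent V}
    (h1 : Provable (φ.imp ψ)) (h2 : Provable (ψ.imp χ)) : Provable (φ.imp χ) :=
  Provable.mp (Provable.mp (Provable.taut taut_trans) h1) h2

/-- Positive introspection `K_C φ → K_C K_C φ` is derivable. -/
private lemma prov_posIntro {C : Set Agent} {φ : Formula Agent V} :
    Provable ((know C φ).imp (know C (know C φ))) := by
  -- K_C φ → ¬K_C ¬K_C φ
  have s2 : Provable ((know C φ).imp (know C (know C φ).neg).neg) :=
    Provable.mp (Provable.taut taut_contra1) (Provable.truthK (C := C) (φ := (know C φ).neg))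
  -- ¬K_C ¬K_C φ → K_C ¬K_C ¬K_C φ
  have s3 : Provable ((know C (know C φ).neg).neg.imp
      (know C (know C (know C φ).neg).neg)) := Provable.negIntro
  -- ¬K_C ¬K_C φ → K_C φ (contraposed negative introspection)
  have s4 : Provable ((know C (know C φ).neg).neg.imp (know C φ)) :=
    Provable.mp (Provable.taut taut_contra2) Provable.negIntro
  -- K_C ¬K_C ¬K_C φ → K_C K_C φ
  have s5 : Provable ((know C (know C (know C φ).neg).neg).imp (know C (know C φ))) :=
    Provable.mp Provable.distr (Provable.nec s4)
  exact prov_trans (prov_trans s2 s3) s5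

/-! ### Maximal consistent sets -/

private lemma provableFrom_insert {X : Set (Formula Agent V)} {φ ψ : Formula Agent V}
    (h : ProvableFrom (insert φ X) ψ) (hφ : ProvableFrom X φ) : ProvableFrom X ψ := by
  induction h with
  | hyp h =>
    rcases Set.mem_insert_iff.mp h with rfl | h
    · exact hφ
    · exact ProvableFrom.hyp h
  | thm h => exact ProvableFrom.thm h
  | mp _ _ ih1 ih2 => exact ProvableFrom.mp ih1 ih2

/-- The deduction theorem. -/
private lemma deduction {X : Set (Formula Agent V)} {φ ψ : Formula Agent V}
    (h : ProvableFrom (insert φ X) ψ) : ProvableFrom X (φ.imp ψ) := by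
  induction h with
  | hyp h =>
    rcases Set.mem_insert_iff.mp h with rfl | h
    · exact ProvableFrom.thm (Provable.taut taut_id)
    · exact ProvableFrom.mp (ProvableFrom.thm (Provable.taut taut_weaken)) (ProvableFrom.hyp h)
  | thm h =>
    exact ProvableFrom.mp (ProvableFrom.thm (Provable.taut taut_weaken)) (ProvableFrom.thm h)
  | mp _ _ ih1 ih2 =>
    exact ProvableFrom.mp (ProvableFrom.mp (ProvableFrom.thm (Provable.taut taut_S)) ih1) ih2

/-- A maximal consistent set is closed under derivability. -/
private lemma maxcons_closed {X : Set (Formula Agent V)} (hX : MaxConsistent X)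
    {φ : Formula Agent V} (h : ProvableFrom X φ) : φ ∈ X := by
  have hcons : Consistent (insert φ X) := by
    rintro ⟨χ, h1, h2⟩
    exact hX.1 ⟨χ, provableFrom_insert h1 h, provableFrom_insert h2 h⟩
  have := hX.2 (insert φ X) (Set.subset_insert _ _) hcons
  rw [← this]; exact Set.mem_insert _ _

private lemma maxcons_mp {X : Set (Formula Agent V)} (hX : MaxConsistent X)
    {φ ψ : Formula Agent V} (h : Provable (φ.imp ψ)) (hφ : φ ∈ X) : ψ ∈ X :=
  maxcons_closed hX (ProvableFrom.mp (ProvableFrom.thm h) (ProvableFrom.hyp hφ))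

private lemma maxcons_neg_mem {X : Set (Formula Agent V)} (hX : MaxConsistent X)
    {φ : Formula Agent V} (h : φ ∉ X) : φ.neg ∈ X := by
  have hncons : ¬ Consistent (insert φ X) := by
    intro hcons
    exact h (by rw [← hX.2 (insert φ X) (Set.subset_insert _ _) hcons]; exact Set.mem_insert _ _)
  rw [Consistent, not_not] at hncons
  obtain ⟨χ, h1, h2⟩ := hncons
  exact maxcons_closed hX
    (ProvableFrom.mp (ProvableFrom.mp (ProvableFrom.thm (Provable.taut taut_negcomb))
      (deduction h1)) (deduction h2))

private lemma maxcons_not_both {X : Set (Formula Agent V)} (hX : MaxConsistent X)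
    {φ : Formula Agent V} (h1 : φ ∈ X) (h2 : φ.neg ∈ X) : False :=
  hX.1 ⟨φ, ProvableFrom.hyp h1, ProvableFrom.hyp h2⟩

/-! ### Transport along one edge and along suffixes -/

private lemma edge_transport {X Y : Set (Formula Agent V)} (hX : MaxConsistent X)
    (hY : MaxConsistent Y) {C E : Set Agent} (hCE : C ⊆ E)
    (hstep : ∀ ψ : Formula Agent V, Formula.know E ψ ∈ X → ψ ∈ Y)
    (φ : Formula Agent V) : know C φ ∈ X ↔ know C φ ∈ Y := by
  constructor
  · intro h
    exact hstep _ (maxcons_mp hX (prov_trans prov_posIntro (Provable.monoK hCE)) h)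
  · intro h
    by_contra hn
    have h1 : (know C φ).neg ∈ X := maxcons_neg_mem hX hn
    have h2 : (know C φ).neg ∈ Y :=
      hstep _ (maxcons_mp hX (prov_trans Provable.negIntro (Provable.monoK hCE)) h1)
    exact maxcons_not_both hY h h2

private lemma hd_transport {C : Set Agent} :
    ∀ (t : List (Step Agent V B)) (X : Set (Formula Agent V)), MaxConsistent X →
      ValidSeq X t → (∀ s ∈ t, C ⊆ s.1) → ∀ φ : Formula Agent V,
      (know C φ ∈ X ↔ know C φ ∈ hdSeq X t)
  | [], X, _, _, _, φ => Iff.rfl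
  | (E, b, Y) :: l, X, hX, hval, hlab, φ => by
    obtain ⟨hY, hstep, hval'⟩ := hval
    have hCE : C ⊆ E := hlab (E, b, Y) List.mem_cons_self
    exact (edge_transport hX hY hCE hstep φ).trans
      (hd_transport l Y hY hval' (fun s hs => hlab s (List.mem_cons_of_mem _ hs)) φ)

/-! ### Splitting valid sequences -/

private lemma validSeq_append {t : List (Step Agent V B)} :
    ∀ (w : List (Step Agent V B)) (X : Set (Formula Agent V)),
      ValidSeq X (w ++ t) → ValidSeq (hdSeq X w) t
  | [], X, h => h
  | (E, b, Y) :: w', X, h => validSeq_append w' Y h.2.2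

private lemma validSeq_prefix {t : List (Step Agent V B)} :
    ∀ (w : List (Step Agent V B)) (X : Set (Formula Agent V)),
      ValidSeq X (w ++ t) → ValidSeq X w
  | [], _, _ => trivial
  | (E, b, Y) :: w', X, h => ⟨h.1, h.2.1, validSeq_prefix w' Y h.2.2⟩

private lemma hdSeq_append {t : List (Step Agent V B)} :
    ∀ (w : List (Step Agent V B)) (X : Set (Formula Agent V)),
      hdSeq X (w ++ t) = hdSeq (hdSeq X w) t
  | [], _ => rfl
  | (E, b, Y) :: w', X => hdSeq_append w' Y

private lemma maxcons_hdSeq : ∀ (l : List (Step Agent V B)) (X : Set (Formula Agent V)),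
    MaxConsistent X → ValidSeq X l → MaxConsistent (hdSeq X l)
  | [], X, hX, _ => hX
  | (E, b, Y) :: l, X, _, h => maxcons_hdSeq l Y h.1 h.2.2

end Aux

/-- Lemma 12, transport lemma: in the canonical game G(X₀),
    if ω ∼_C ω' then K_C φ ∈ hd(ω) iff K_C φ ∈ hd(ω'). -/
theorem transport_lemma {Agent V B : Type}
    (hB : Cardinal.mk Agent < Cardinal.mk B)
    (X₀ : Set (Formula Agent V)) (hX₀ : MaxConsistent X₀)
    (C : Set Agent) (ω ω' : COutcome X₀ B) (h : csimC C ω ω')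
    (φ : Formula Agent V) :
    Formula.know C φ ∈ chd ω ↔ Formula.know C φ ∈ chd ω' := by
  classical
  obtain ⟨L1, hval1⟩ := ω
  obtain ⟨L2, hval2⟩ := ω'
  show Formula.know C φ ∈ hdSeq X₀ L1 ↔ Formula.know C φ ∈ hdSeq X₀ L2
  set P : ℕ → Prop := fun n => L1.take n = L2.take n with hP
  set N : ℕ := Nat.findGreatest P L1.length with hN
  have hPN : P N := Nat.findGreatest_spec (P := P) (Nat.zero_le _) (by simp [hP])
  set w : List (Step Agent V B) := L1.take N with hw
  have h1 : L1 = w ++ L1.drop N := (List.take_append_drop N L1).symm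
  have h2 : L2 = w ++ L2.drop N := by
    rw [hw, hPN]; exact (List.take_append_drop N L2).symm
  -- every step after the common prefix is labeled with every agent of C
  have hlab : ∀ a ∈ C, (∀ s ∈ L1.drop N, a ∈ s.1) ∧ (∀ s ∈ L2.drop N, a ∈ s.1) := by
    intro a ha
    obtain ⟨wa, ta, ta', hu, hv, hta, hta'⟩ := h a ha
    have hu' : L1 = wa ++ ta := hu
    have hv' : L2 = wa ++ ta' := hv
    have hwa1 : wa <+: L1 := ⟨ta, hu'.symm⟩
    have hwa2 : wa <+: L2 := ⟨ta', hv'.symm⟩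
    have hPwa : P wa.length :=
      (List.prefix_iff_eq_take.mp hwa1).symm.trans (List.prefix_iff_eq_take.mp hwa2)
    have hle : wa.length ≤ N := Nat.le_findGreatest hwa1.length_le hPwa
    have hwaw : wa <+: w := by
      rw [hw, List.prefix_iff_eq_take.mp hwa1]
      exact List.take_isPrefix_take.mpr (Or.inl hle)
    obtain ⟨m, hm⟩ := hwaw
    have hta2 : ta = m ++ L1.drop N := by
      apply List.append_cancel_left (as := wa)
      rw [← hu', ← List.append_assoc, hm, ← h1]
    have hta2' : ta' = m ++ L2.drop N := by
      apply List.append_cancel_left (as := wa)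
      rw [← hv', ← List.append_assoc, hm, ← h2]
    exact ⟨fun s hs => hta s (hta2 ▸ List.mem_append_right _ hs),
      fun s hs => hta' s (hta2' ▸ List.mem_append_right _ hs)⟩
  have hvw : ValidSeq X₀ w := validSeq_prefix w X₀ (h1 ▸ hval1)
  have hYmax : MaxConsistent (hdSeq X₀ w) := maxcons_hdSeq w X₀ hX₀ hvw
  have ht1 : ValidSeq (hdSeq X₀ w) (L1.drop N) := validSeq_append w X₀ (h1 ▸ hval1)
  have ht2 : ValidSeq (hdSeq X₀ w) (L2.drop N) := validSeq_append w X₀ (h2 ▸ hval2)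
  have e1 : hdSeq X₀ L1 = hdSeq (hdSeq X₀ w) (L1.drop N) := by
    conv_lhs => rw [h1]
    exact hdSeq_append w X₀
  have e2 : hdSeq X₀ L2 = hdSeq (hdSeq X₀ w) (L2.drop N) := by
    conv_lhs => rw [h2]
    exact hdSeq_append w X₀
  rw [e1, e2]
  exact (hd_transport (L1.drop N) (hdSeq X₀ w) hYmax ht1
      (fun s hs a ha => (hlab a ha).1 s hs) φ).symm.trans
    (hd_transport (L2.drop N) (hdSeq X₀ w) hYmax ht2
      (fun s hs a ha => (hlab a ha).2 s hs) φ)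

end DutyToWarn
end
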